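/- Over an algebraically closed field, the set of tensors $T \in U \otimes V \otimes W$ of minrank at most $r$ is Zariski closed. -/

import Mathlib

open scoped BigOperators

/-- Contraction of a tensor against a linear functional on the first factor. -/
def contractT {F : Type*} [Field F] {α β γ : Type*} [Fintype α]
    (T : α → β → γ → F) (x : α → F) : Matrix β γ F :=
  Matrix.of fun j k => ∑ i, x i * T i j k

/-- `T` has minrank at most `r`. -/
def MinrankLE {F : Type*} [Field F] {α β γ : Type*} [Fintype α] [Fintype β] [Fintype γ]
    (T : α → β → γ → F) (r : ℕ) : Prop :=
  ∃ x : α → F, x ≠ 0 ∧ (contractT T x).rank ≤ r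

noncomputable section ZarAux

open Matrix MvPolynomial

set_option linter.unusedSectionVars false

variable {F : Type*} [Field F]

/-! ### Linear algebra helpers -/

/-- From a family whose span has finrank at least `s`, extract `s` linearly
independent members. -/
lemma zar_exists_comp {ι V : Type*} [AddCommGroup V] [Module F V] [FiniteDimensional F V]
    (v : ι → V) (s : ℕ) (h : s ≤ Module.finrank F (Submodule.span F (Set.range v))) :
    ∃ c : Fin s → ι, LinearIndependent F (fun i => v (c i)) := by
  obtain ⟨t, hts, hspan, hli⟩ := exists_linearIndependent F (Set.range v)
  have htf : t.Finite := hli.setFinite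
  haveI : Fintype t := htf.fintype
  have hcard : s ≤ Fintype.card t := by
    have := finrank_span_set_eq_card hli
    rw [hspan] at this
    rw [← Set.toFinset_card, ← this]
    exact h
  obtain ⟨g⟩ : Nonempty (Fin s ↪ t) := by
    apply Function.Embedding.nonempty_of_card_le
    simpa using hcard
  have hmem : ∀ i : Fin s, (g i : V) ∈ Set.range v := fun i => hts (g i).2
  choose c hc using fun i => hmem i
  refine ⟨c, ?_⟩
  have : (fun i => v (c i)) = (fun x : t => (x : V)) ∘ g := by
    funext i; simp [hc i]
  rw [this]
  exact hli.comp g g.injective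

lemma zar_det_submatrix_eq_zero {m n r : ℕ} (M : Matrix (Fin m) (Fin n) F)
    (h : M.rank ≤ r) (a : Fin (r+1) → Fin m) (b : Fin (r+1) → Fin n) :
    (M.submatrix a b).det = 0 := by
  by_contra hd
  have hu : IsUnit (M.submatrix a b) := by
    rw [Matrix.isUnit_iff_isUnit_det]
    exact isUnit_iff_ne_zero.2 hd
  have hr : (M.submatrix a b).rank = r + 1 := by
    rw [Matrix.rank_of_isUnit _ hu, Fintype.card_fin]
  have hle : (M.submatrix a b).rank ≤ M.rank := by
    have e1 : M.submatrix a b =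
        ((1 : Matrix (Fin m) (Fin m) F).submatrix a (Equiv.refl (Fin m))) *
          (M * (1 : Matrix (Fin n) (Fin n) F).submatrix (Equiv.refl (Fin n)) b) := by
      rw [Matrix.mul_submatrix_one, Matrix.one_submatrix_mul]
      simp [Matrix.submatrix_submatrix]
    calc (M.submatrix a b).rank
        ≤ (M * (1 : Matrix (Fin n) (Fin n) F).submatrix (Equiv.refl (Fin n)) b).rank := by
          rw [e1]; exact Matrix.rank_mul_le_right _ _
      _ ≤ M.rank := Matrix.rank_mul_le_left _ _
  omega

lemma zar_exists_det_ne_zero {m n r : ℕ} (M : Matrix (Fin m) (Fin n) F)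
    (h : r < M.rank) :
    ∃ (a : Fin (r+1) → Fin m) (b : Fin (r+1) → Fin n), (M.submatrix a b).det ≠ 0 := by
  have h1 : r + 1 ≤ Module.finrank F (Submodule.span F (Set.range Mᵀ)) := by
    change r + 1 ≤ Module.finrank F (Submodule.span F (Set.range M.col))
    rw [← Matrix.rank_eq_finrank_span_cols]; omega
  obtain ⟨b, hb⟩ := zar_exists_comp Mᵀ (r+1) h1
  set N : Matrix (Fin m) (Fin (r+1)) F := M.submatrix id b with hN
  have hNt : Nᵀ = fun i => Mᵀ (b i) := by
    funext i j; rfl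
  have hrankN : N.rank = r + 1 := by
    rw [Matrix.rank_eq_finrank_span_cols]
    change Module.finrank F (Submodule.span F (Set.range Nᵀ)) = r + 1
    rw [hNt]
    rw [finrank_span_eq_card hb, Fintype.card_fin]
  have h2 : r + 1 ≤ Module.finrank F (Submodule.span F (Set.range N)) := by
    have : Nᵀ.rank = Module.finrank F (Submodule.span F (Set.range N)) := by
      exact Matrix.rank_eq_finrank_span_cols _
    rw [← this, Matrix.rank_transpose, hrankN]
  obtain ⟨a, ha⟩ := zar_exists_comp N (r+1) h2
  refine ⟨a, b, ?_⟩
  have hrows : (fun i => M.submatrix a b i) = fun i => N (a i) := by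
    funext i j; rfl
  have hu : IsUnit (M.submatrix a b) := by
    rw [← Matrix.linearIndependent_rows_iff_isUnit]
    exact ha
  rw [Matrix.isUnit_iff_isUnit_det, isUnit_iff_ne_zero] at hu
  exact hu

/-! ### Exponent vectors of fixed degree as a fintype -/

/-- Exponent vectors of degree `D` on `Fin k`, as a fintype. -/
abbrev ZarRow (k D : ℕ) := {v : Fin k → Fin (D+1) // ∑ i, (v i : ℕ) = D}

def zarToF {k D : ℕ} (v : ZarRow k D) : Fin k →₀ ℕ :=
  Finsupp.equivFunOnFinite.symm fun i => (v.1 i : ℕ)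

lemma zarToF_apply {k D : ℕ} (v : ZarRow k D) (i : Fin k) : zarToF v i = (v.1 i : ℕ) := rfl

lemma zar_degree_eq_sum {k : ℕ} (e : Fin k →₀ ℕ) : e.degree = ∑ i, e i := by
  rw [Finsupp.degree]
  exact Finset.sum_subset (Finset.subset_univ _)
    (fun i _ hi => Finsupp.notMem_support_iff.1 hi)

lemma zarToF_degree {k D : ℕ} (v : ZarRow k D) : (zarToF v).degree = D := by
  rw [zar_degree_eq_sum]
  simpa [zarToF_apply] using v.2

lemma zarToF_injective {k D : ℕ} : Function.Injective (zarToF (k := k) (D := D)) := by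
  intro v w h
  apply Subtype.ext
  funext i
  have := congrFun (congrArg (fun f : Fin k →₀ ℕ => (f : Fin k → ℕ)) h) i
  simpa [zarToF_apply, Fin.ext_iff] using this

lemma zar_exists_row {k D : ℕ} (e : Fin k →₀ ℕ) (he : e.degree = D) :
    ∃ v : ZarRow k D, zarToF v = e := by
  have hle : ∀ i, e i ≤ D := fun i => he ▸ Finsupp.le_degree i e
  refine ⟨⟨fun i => ⟨e i, Nat.lt_succ_of_le (hle i)⟩, ?_⟩, ?_⟩
  · simp only []
    rw [← zar_degree_eq_sum e, he]
  · ext i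
    simp [zarToF_apply]

/-! ### The universal minors -/

variable {A B : Type*} [CommRing A] [CommRing B]

/-- The `(r+1)`-minor of the contraction of the tensor `t` against a generic vector of
variables, as a polynomial in those variables. -/
def zarF {k m n : ℕ} (r : ℕ) (t : Fin k → Fin m → Fin n → A)
    (a : Fin (r+1) → Fin m) (b : Fin (r+1) → Fin n) : MvPolynomial (Fin k) A :=
  (Matrix.of fun i j : Fin (r+1) => ∑ l, X l * C (t l (a i) (b j))).det

lemma zarF_map {k m n r : ℕ} (φ : A →+* B) (t : Fin k → Fin m → Fin n → A)
    (a : Fin (r+1) → Fin m) (b : Fin (r+1) → Fin n) :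
    MvPolynomial.map φ (zarF r t a b) = zarF r (fun l i j => φ (t l i j)) a b := by
  unfold zarF
  rw [RingHom.map_det]
  congr 1
  ext i j
  simp [Matrix.map_apply, map_sum]

lemma zarF_isHomogeneous {k m n r : ℕ} (t : Fin k → Fin m → Fin n → A)
    (a : Fin (r+1) → Fin m) (b : Fin (r+1) → Fin n) :
    (zarF r t a b).IsHomogeneous (r+1) := by
  rw [← mem_homogeneousSubmodule]
  unfold zarF
  rw [Matrix.det_apply]
  apply Submodule.sum_mem
  intro τ _
  have hprod : (∏ i, (Matrix.of fun i j : Fin (r+1) =>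
      ∑ l, X l * C (t l (a i) (b j))) (τ i) i) ∈
      homogeneousSubmodule (Fin k) A (r+1) := by
    rw [mem_homogeneousSubmodule]
    have hp := IsHomogeneous.prod Finset.univ
      (fun i => (Matrix.of fun i j : Fin (r+1) => ∑ l, X l * C (t l (a i) (b j))) (τ i) i)
      (fun _ => 1) (fun i _ => by
        show ((Matrix.of fun i j : Fin (r+1) =>
          ∑ l, X l * C (t l (a i) (b j))) (τ i) i).IsHomogeneous 1
        simp only [Matrix.of_apply]
        apply IsHomogeneous.sum
        intro l _
        rw [mul_comm]
        exact (isHomogeneous_X A l).C_mul _)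
    simpa using hp
  obtain h | h := Int.units_eq_one_or (Equiv.Perm.sign τ)
  · rw [h, one_smul]; exact hprod
  · rw [h]
    have : ((-1 : ℤˣ) : ℤ) • (∏ i, (Matrix.of fun i j : Fin (r+1) =>
        ∑ l, X l * C (t l (a i) (b j))) (τ i) i) = -(∏ i, (Matrix.of fun i j : Fin (r+1) =>
        ∑ l, X l * C (t l (a i) (b j))) (τ i) i) := by
      simp
    rw [Units.smul_def, this]
    exact Submodule.neg_mem _ hprod

lemma zarF_eval {k m n r : ℕ} (T : Fin k → Fin m → Fin n → F)
    (x : Fin k → F) (a : Fin (r+1) → Fin m) (b : Fin (r+1) → Fin n) :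
    eval x (zarF r T a b) = ((contractT T x).submatrix a b).det := by
  unfold zarF
  rw [RingHom.map_det]
  congr 1
  ext i j
  simp [Matrix.map_apply, contractT]

/-! ### Homogeneous components of multiples of a homogeneous polynomial -/

lemma zar_hc_mul {σ : Type*} (g f : MvPolynomial σ A) (d D : ℕ) (hf : f.IsHomogeneous d)
    (hd : d ≤ D) :
    homogeneousComponent D (g * f) =
      homogeneousComponent (D - d) g * f := by
  conv_lhs => rw [← sum_homogeneousComponent g]
  rw [Finset.sum_mul, map_sum]
  have hterm : ∀ i, homogeneousComponent D (homogeneousComponent i g * f) =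
      if i = D - d then homogeneousComponent i g * f else 0 := by
    intro i
    have hmem : homogeneousComponent i g * f ∈ homogeneousSubmodule σ A (i + d) := by
      rw [mem_homogeneousSubmodule]
      exact (homogeneousComponent_isHomogeneous i g).mul hf
    rw [homogeneousComponent_of_mem hmem]
    congr 1
    simp only [eq_iff_iff]
    omega
  simp_rw [hterm]
  rw [Finset.sum_ite_eq' (Finset.range (g.totalDegree + 1)) (D - d)
    (fun i => homogeneousComponent i g * f)]
  by_cases hin : D - d ∈ Finset.range (g.totalDegree + 1)
  · rw [if_pos hin]
  · rw [if_neg hin]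
    have : homogeneousComponent (D - d) g = 0 := by
      apply homogeneousComponent_eq_zero
      simp only [Finset.mem_range] at hin
      omega
    rw [this, zero_mul]

/-! ### The coefficient map and the two key equivalences -/

def zarTheta (k D : ℕ) : MvPolynomial (Fin k) F →ₗ[F] (ZarRow k D → F) where
  toFun p := fun v => coeff (zarToF v) p
  map_add' := by intros; funext v; simp
  map_smul' := by intros; funext v; simp

lemma zarTheta_monomial {k D : ℕ} (v : ZarRow k D) :
    zarTheta k D (monomial (zarToF v) (1 : F)) = Pi.single v 1 := by
  funext w
  simp only [zarTheta, LinearMap.coe_mk, AddHom.coe_mk, coeff_monomial]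
  rw [Pi.single_apply]
  by_cases h : w = v
  · subst h; simp
  · rw [if_neg (fun hh => h (zarToF_injective hh).symm), if_neg h]

lemma zarTheta_inj_homog {k D : ℕ} {p q : MvPolynomial (Fin k) F}
    (hp : p.IsHomogeneous D) (hq : q.IsHomogeneous D)
    (h : zarTheta k D p = zarTheta k D q) : p = q := by
  ext e
  by_cases he : e.degree = D
  · obtain ⟨v, hv⟩ := zar_exists_row e he
    have := congrFun h v
    simpa [zarTheta, hv] using this
  · rw [hp.coeff_eq_zero he, hq.coeff_eq_zero he]

section L12

variable {k : ℕ} {D : ℕ} {ι : Type*}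
variable (gen : ι → MvPolynomial (Fin k) F)

/-- All monomials of degree `D` lie in the span of the (degree-`D` homogeneous)
generators iff the coefficient vectors of the generators span everything. -/
lemma zar_L1 (hgen : ∀ c, (gen c).IsHomogeneous D) :
    (∀ e : Fin k →₀ ℕ, e.degree = D → monomial e (1 : F) ∈ Submodule.span F (Set.range gen))
    ↔ ⊤ ≤ Submodule.span F (Set.range fun c => zarTheta (F := F) k D (gen c)) := by
  have hmap : Submodule.span F (Set.range fun c => zarTheta (F := F) k D (gen c)) =
      (Submodule.span F (Set.range gen)).map (zarTheta k D) := by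
    rw [Submodule.map_span]
    congr 1
    rw [← Set.range_comp]
    rfl
  constructor
  · intro H
    rw [hmap]
    intro w _
    have hw : w = ∑ v, w v • (Pi.single v (1 : F) : ZarRow k D → F) := by
      funext u
      rw [Finset.sum_apply]
      have : ∀ v : ZarRow k D,
          (w v • (Pi.single v (1 : F) : ZarRow k D → F)) u
            = (Pi.single v (w v) : ZarRow k D → F) u := by
        intro v
        rw [← Pi.single_smul]
        simp
      simp_rw [this]
      rw [← Finset.sum_apply u Finset.univ
        (fun v => (Pi.single v (w v) : ZarRow k D → F))]
      rw [Finset.univ_sum_single]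
    rw [hw]
    apply Submodule.sum_mem
    intro v _
    apply Submodule.smul_mem
    rw [← zarTheta_monomial v]
    exact Submodule.mem_map_of_mem (H _ (zarToF_degree v))
  · intro H e he
    obtain ⟨v, hv⟩ := zar_exists_row e he
    have : (Pi.single v (1 : F)) ∈
        (Submodule.span F (Set.range gen)).map (zarTheta k D) := by
      rw [← hmap]; exact H trivial
    obtain ⟨q, hqV, hq⟩ := this
    have hqh : q.IsHomogeneous D := by
      have hle : Submodule.span F (Set.range gen) ≤ homogeneousSubmodule (Fin k) F D := by
        rw [Submodule.span_le]
        rintro _ ⟨c, rfl⟩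
        exact (hgen c)
      exact (hle hqV)
    have : q = monomial e (1 : F) := by
      apply zarTheta_inj_homog hqh (isHomogeneous_monomial 1 he)
      rw [hq, ← hv, zarTheta_monomial]
    rwa [this] at hqV

/-- Spanning iff some maximal minor of the coefficient matrix is nonzero. -/
lemma zar_L2 (vec : ι → (ZarRow k D → F)) :
    ⊤ ≤ Submodule.span F (Set.range vec) ↔
      ∃ s : ZarRow k D → ι,
        (Matrix.of fun v w => vec (s w) v).det ≠ 0 := by
  constructor
  · intro H
    have hfr : Fintype.card (ZarRow k D) ≤
        Module.finrank F (Submodule.span F (Set.range vec)) := by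
      have : Submodule.span F (Set.range vec) = ⊤ := top_le_iff.mp H
      rw [this, finrank_top, Module.finrank_fintype_fun_eq_card]
    obtain ⟨c, hc⟩ := zar_exists_comp vec _ hfr
    refine ⟨fun v => c ((Fintype.equivFin (ZarRow k D)) v), ?_⟩
    have hli : LinearIndependent F
        (fun v : ZarRow k D => vec (c ((Fintype.equivFin (ZarRow k D)) v))) :=
      hc.comp _ (Fintype.equivFin (ZarRow k D)).injective
    have hu : IsUnit (Matrix.of fun v w =>
        vec (c ((Fintype.equivFin (ZarRow k D)) w)) v) := by
      rw [← Matrix.linearIndependent_cols_iff_isUnit]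
      convert hli using 1
      rfl
    rw [Matrix.isUnit_iff_isUnit_det, isUnit_iff_ne_zero] at hu
    exact hu
  · rintro ⟨s, hs⟩
    have hu : IsUnit (Matrix.of fun v w => vec (s w) v) := by
      rw [Matrix.isUnit_iff_isUnit_det, isUnit_iff_ne_zero]; exact hs
    have hli : LinearIndependent F (fun w => vec (s w)) := by
      have := Matrix.linearIndependent_cols_iff_isUnit.mpr hu
      convert this using 1
      rfl
    have hspan := hli.span_eq_top_of_card_eq_finrank'
      (by rw [Module.finrank_fintype_fun_eq_card])
    rw [← hspan]
    apply Submodule.span_mono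
    rintro _ ⟨w, rfl⟩
    exact ⟨s w, rfl⟩

end L12

/-! ### The spanning lemma (pigeonhole + graded pieces) -/

section SpanLemma

variable {k m n r : ℕ} (T : Fin k → Fin m → Fin n → F)

/-- Column index: a choice of minor together with an exponent vector of degree `d`. -/
abbrev ZarCol (k m n r d : ℕ) :=
  ((Fin (r+1) → Fin m) × (Fin (r+1) → Fin n)) × ZarRow k d

/-- The generator attached to a column index. -/
def zarGen {A : Type*} [CommRing A] (k m n r d : ℕ) (t : Fin k → Fin m → Fin n → A)
    (c : ZarCol k m n r d) : MvPolynomial (Fin k) A :=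
  monomial (zarToF c.2) 1 * zarF r t c.1.1 c.1.2

lemma zarGen_isHomogeneous {A : Type*} [CommRing A] {k m n r d : ℕ}
    (t : Fin k → Fin m → Fin n → A) (c : ZarCol k m n r d) :
    (zarGen k m n r d t c).IsHomogeneous (d + (r+1)) :=
  (isHomogeneous_monomial 1 (zarToF_degree c.2)).mul (zarF_isHomogeneous t c.1.1 c.1.2)

lemma zar_hc_mul_mem {k m n r d : ℕ} (T : Fin k → Fin m → Fin n → F)
    (h : MvPolynomial (Fin k) F) (p : (Fin (r+1) → Fin m) × (Fin (r+1) → Fin n)) :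
    homogeneousComponent d h * zarF r T p.1 p.2 ∈
      Submodule.span F (Set.range (zarGen k m n r d T)) := by
  rw [homogeneousComponent_apply, Finset.sum_mul]
  apply Submodule.sum_mem
  intro e' he'
  have hdeg : e'.degree = d := (Finset.mem_filter.1 he').2
  obtain ⟨v, hv⟩ := zar_exists_row e' hdeg
  have heq : (monomial e') (coeff e' h) * zarF r T p.1 p.2 =
      (coeff e' h) • (zarGen k m n r d T (p, v)) := by
    rw [zarGen]
    simp only [hv]
    rw [← smul_mul_assoc, smul_monomial, smul_eq_mul, mul_one]
  rw [heq]
  exact Submodule.smul_mem _ _ (Submodule.subset_span ⟨(p, v), rfl⟩)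

/-- If every `X j ^ D0` lies in the ideal generated by the minors, then every monomial of
degree `k * D0 + (r+1)` lies in the `F`-span of the degree-shifted generators. -/
lemma zar_span_monomials {k m n r : ℕ} (T : Fin k → Fin m → Fin n → F) (D0 : ℕ)
    (hI : ∀ j : Fin k, (X j : MvPolynomial (Fin k) F) ^ D0 ∈
      Ideal.span (Set.range fun p : (Fin (r+1) → Fin m) × (Fin (r+1) → Fin n) =>
        zarF r T p.1 p.2)) :
    ∀ e : Fin k →₀ ℕ, e.degree = k * D0 + (r+1) →
      monomial e (1 : F) ∈ Submodule.span F (Set.range (zarGen k m n r (k * D0) T)) := by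
  intro e he
  have hdeg := zar_degree_eq_sum e
  have hj : ∃ j, D0 ≤ e j := by
    by_contra h'
    push_neg at h'
    have h1 : ∑ i, e i ≤ ∑ _i : Fin k, (D0 - 1) :=
      Finset.sum_le_sum fun i _ => Nat.le_pred_of_lt (h' i)
    have h2 : (∑ _i : Fin k, (D0 - 1)) = k * (D0 - 1) := by
      rw [Finset.sum_const, Finset.card_univ, Fintype.card_fin, smul_eq_mul]
    have h3 : k * (D0 - 1) ≤ k * D0 := Nat.mul_le_mul_left _ (Nat.pred_le _)
    omega
  obtain ⟨j, hj⟩ := hj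
  obtain ⟨g, hg⟩ := (Ideal.mem_span_range_iff_exists_fun).1 (hI j)
  have hsub : (e - Finsupp.single j D0) + Finsupp.single j D0 = e := by
    ext i
    simp only [Finsupp.coe_add, Pi.add_apply, Finsupp.tsub_apply, Finsupp.single_apply]
    by_cases h : j = i
    · subst h; simp; omega
    · simp [h]
  have hmono : monomial e (1 : F) =
      monomial (e - Finsupp.single j D0) 1 * ((X j : MvPolynomial (Fin k) F) ^ D0) := by
    rw [X_pow_eq_monomial, monomial_mul, mul_one, hsub]
  set D : ℕ := k * D0 + (r + 1) with hD
  have hid : monomial e (1 : F) =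
      ∑ p : (Fin (r+1) → Fin m) × (Fin (r+1) → Fin n),
        (monomial (e - Finsupp.single j D0) 1 * g p) * zarF r T p.1 p.2 := by
    rw [hmono, ← hg, Finset.mul_sum]
    simp_rw [← mul_assoc]
  have hhc := congrArg (homogeneousComponent D) hid
  rw [map_sum] at hhc
  have hlhs : homogeneousComponent D (monomial e (1 : F)) = monomial e (1 : F) := by
    have hm : monomial e (1 : F) ∈ homogeneousSubmodule (Fin k) F D := by
      rw [mem_homogeneousSubmodule]
      exact isHomogeneous_monomial 1 he
    rw [homogeneousComponent_of_mem hm, if_pos rfl]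
  rw [hlhs] at hhc
  rw [hhc]
  apply Submodule.sum_mem
  intro p _
  rw [zar_hc_mul _ _ (r+1) D (zarF_isHomogeneous T p.1 p.2) (by omega)]
  have : D - (r+1) = k * D0 := by omega
  rw [this]
  exact zar_hc_mul_mem T _ p

end SpanLemma

end ZarAux

/-- Over an algebraically closed field, the set of tensors of minrank at most `r`
is Zariski closed: it is the common zero locus of a set of polynomials in the
coordinates of the tensor. -/
theorem stmt3 {F : Type*} [Field F] [IsAlgClosed F] (k m n r : ℕ) :
    ∃ P : Set (MvPolynomial (Fin k × Fin m × Fin n) F),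
      {T : Fin k → Fin m → Fin n → F | MinrankLE T r} =
      {T : Fin k → Fin m → Fin n → F |
        ∀ p ∈ P, MvPolynomial.eval (fun q => T q.1 q.2.1 q.2.2) p = 0} := by
  classical
  open MvPolynomial in
  -- the universal tensor
  let tU : Fin k → Fin m → Fin n → MvPolynomial (Fin k × Fin m × Fin n) F :=
    fun l i j => X (l, i, j)
  refine ⟨{q | ∃ (d : ℕ) (s : ZarRow k (d + (r+1)) → ZarCol k m n r d),
    q = (Matrix.of fun v w => coeff (zarToF v) (zarGen k m n r d tU (s w))).det}, ?_⟩
  ext T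
  simp only [Set.mem_setOf_eq]
  -- evaluation at the tensor T
  set evT : MvPolynomial (Fin k × Fin m × Fin n) F →+* F :=
    (eval (fun q : Fin k × Fin m × Fin n => T q.1 q.2.1 q.2.2) :
      MvPolynomial (Fin k × Fin m × Fin n) F →+* F) with hevT
  have hcompat : ∀ (d : ℕ) (c : ZarCol k m n r d),
      MvPolynomial.map evT (zarGen k m n r d tU c) = zarGen k m n r d T c := by
    intro d c
    rw [zarGen, zarGen, map_mul, zarF_map]
    congr 1
    · rw [map_monomial]; simp
    · congr 1
      funext l i j
      simp [tU, hevT]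
  have hdet : ∀ (d : ℕ) (s : ZarRow k (d + (r+1)) → ZarCol k m n r d),
      evT ((Matrix.of fun v w => coeff (zarToF v) (zarGen k m n r d tU (s w))).det) =
        (Matrix.of fun v w => coeff (zarToF v) (zarGen k m n r d T (s w))).det := by
    intro d s
    rw [RingHom.map_det]
    congr 1
    ext v w
    simp only [RingHom.mapMatrix_apply, Matrix.map_apply, Matrix.of_apply]
    rw [← hcompat d (s w), coeff_map]
  constructor
  · -- minrank small ⟹ all the polynomials vanish
    rintro ⟨x, hx0, hxr⟩ p ⟨d, s, rfl⟩
    by_contra hne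
    rw [hdet d s] at hne
    -- the coefficient vectors of the generators span everything
    have hspan : ⊤ ≤ Submodule.span F
        (Set.range fun c => zarTheta (F := F) k (d + (r+1)) (zarGen k m n r d T c)) := by
      rw [zar_L2 (fun c => zarTheta (F := F) k (d + (r+1)) (zarGen k m n r d T c))]
      exact ⟨s, hne⟩
    have hmon := (zar_L1 (zarGen k m n r d T)
      (fun c => zarGen_isHomogeneous T c)).2 hspan
    -- but everything in the span vanishes at x
    obtain ⟨j, hxj⟩ : ∃ j, x j ≠ 0 := by
      by_contra h'
      push_neg at h'
      exact hx0 (funext h')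
    have hzero : ∀ pr : (Fin (r+1) → Fin m) × (Fin (r+1) → Fin n),
        eval x (zarF r T pr.1 pr.2) = 0 := by
      intro pr
      rw [zarF_eval]
      exact zar_det_submatrix_eq_zero _ hxr pr.1 pr.2
    set K : Submodule F (MvPolynomial (Fin k) F) :=
      LinearMap.ker (((aeval x : MvPolynomial (Fin k) F →ₐ[F] F)).toLinearMap) with hK
    have haev : ∀ q : MvPolynomial (Fin k) F, aeval x q = eval x q := by
      intro q
      rw [← coe_aeval_eq_eval]
      rfl
    have hVK : Submodule.span F (Set.range (zarGen k m n r d T)) ≤ K := by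
      rw [Submodule.span_le]
      rintro _ ⟨c, rfl⟩
      simp only [hK, SetLike.mem_coe, LinearMap.mem_ker, AlgHom.toLinearMap_apply]
      rw [haev, zarGen, map_mul, hzero ⟨c.1.1, c.1.2⟩, mul_zero]
    -- the monomial (x j)^(d+r+1) must vanish, contradiction
    have hsingle : (Finsupp.single j (d + (r+1))).degree = d + (r+1) := by
      rw [zar_degree_eq_sum]
      rw [Finset.sum_eq_single j (fun i _ hij => by
        rw [Finsupp.single_apply, if_neg fun h => hij h.symm])
        (fun h => absurd (Finset.mem_univ j) h)]
      rw [Finsupp.single_apply, if_pos rfl]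
    have hmem := hVK (hmon (Finsupp.single j (d + (r+1))) hsingle)
    simp only [hK, LinearMap.mem_ker, AlgHom.toLinearMap_apply] at hmem
    rw [haev, eval_monomial] at hmem
    rw [Finsupp.prod_single_index (by simp)] at hmem
    simp only [one_mul] at hmem
    exact pow_ne_zero _ hxj hmem
  · -- all the polynomials vanish ⟹ minrank small
    intro hP
    by_contra hT
    -- every nonzero x yields a nonvanishing minor
    have hnz : ∀ x : Fin k → F, x ≠ 0 →
        ∃ pr : (Fin (r+1) → Fin m) × (Fin (r+1) → Fin n),
          eval x (zarF r T pr.1 pr.2) ≠ 0 := by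
      intro x hx
      have hrank : r < (contractT T x).rank := by
        by_contra h'
        exact hT ⟨x, hx, by omega⟩
      obtain ⟨a, b, hab⟩ := zar_exists_det_ne_zero _ hrank
      exact ⟨(a, b), by rwa [zarF_eval]⟩
    set I : Ideal (MvPolynomial (Fin k) F) :=
      Ideal.span (Set.range fun pr : (Fin (r+1) → Fin m) × (Fin (r+1) → Fin n) =>
        zarF r T pr.1 pr.2) with hI
    have hrad : ∀ j : Fin k, (X j : MvPolynomial (Fin k) F) ∈ I.radical := by
      intro j
      rw [← vanishingIdeal_zeroLocus_eq_radical (K := F) I]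
      rw [mem_vanishingIdeal_iff]
      intro x hx
      have hx0 : x = 0 := by
        by_contra hxne
        obtain ⟨pr, hpr⟩ := hnz x hxne
        exact hpr (hx _ (Ideal.subset_span ⟨pr, rfl⟩))
      subst hx0
      simp
    choose dp hdp using fun j => (Ideal.mem_radical_iff.1 (hrad j))
    set D0 : ℕ := Finset.univ.sup dp with hD0
    have hXD0 : ∀ j : Fin k, (X j : MvPolynomial (Fin k) F) ^ D0 ∈ I := by
      intro j
      have hle : dp j ≤ D0 := Finset.le_sup (Finset.mem_univ j)
      have : (X j : MvPolynomial (Fin k) F) ^ D0 =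
          (X j) ^ (D0 - dp j) * (X j) ^ (dp j) := by
        rw [← pow_add]
        congr 1
        omega
      rw [this]
      exact Ideal.mul_mem_left _ _ (hdp j)
    have hmon := zar_span_monomials T D0 hXD0
    have hspan := (zar_L1 (zarGen k m n r (k * D0) T)
      (fun c => zarGen_isHomogeneous T c)).1 hmon
    obtain ⟨s, hs⟩ := (zar_L2
      (fun c => zarTheta (F := F) k (k * D0 + (r+1)) (zarGen k m n r (k * D0) T c))).1 hspan
    refine hs ?_
    have := hP _ ⟨k * D0, s, rfl⟩
    rw [hdet (k * D0) s] at this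
    exact this
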